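/- For every integer D ≥ 2 and every real K > 1, there exists ε_K > 0 such that for all complex numbers g_1, …, g_D with |g_i| < ε_K for each i and every integer n ≥ 0, the sum F_n(g_1,…,g_D) = ∑_{(p_1,…,p_D) ∈ ℕ^D} C^n_{p_1…p_D} ∏_i g_i^{p_i} satisfies |F_n(g_1,…,g_D)| ≤ K^n. -/

import Mathlib

lemma choose_mul_pow_le (m k : ℕ) {t : ℝ} (ht : 0 ≤ t) :
    (m.choose k : ℝ) * t ^ k ≤ (1 + t) ^ m := by
  rcases le_or_gt k m with h | h
  · have hexp : (t + 1) ^ m = ∑ i ∈ Finset.range (m + 1), t ^ i * 1 ^ (m - i) * (m.choose i) :=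
      add_pow t 1 m
    have hle := Finset.single_le_sum (f := fun i => t ^ i * 1 ^ (m - i) * (m.choose i : ℝ))
      (fun i _ => by positivity) (Finset.mem_range.2 (Nat.lt_succ_of_le h))
    calc (m.choose k : ℝ) * t ^ k = t ^ k * 1 ^ (m - k) * (m.choose k) := by ring
      _ ≤ (t + 1) ^ m := by rw [hexp]; exact hle
      _ = (1 + t) ^ m := by ring
  · simp [Nat.choose_eq_zero_of_lt h]
    positivity

lemma hasSum_pi_geometric (d : ℕ) {r : ℝ} (h0 : 0 ≤ r) (h1 : r < 1) :
    HasSum (fun p : Fin d → ℕ => ∏ j, r ^ p j) ((1 - r)⁻¹ ^ d) := by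
  induction d with
  | zero =>
      have he : (fun p : Fin 0 → ℕ => ∏ j, r ^ p j) = fun _ => (1 : ℝ) := by
        funext p; simp
      rw [he]
      simpa using hasSum_single (f := fun _ : Fin 0 → ℕ => (1:ℝ)) default
        (fun b hb => absurd (Subsingleton.elim b default) hb)
  | succ d ih =>
      have hgeo : HasSum (fun k : ℕ => r ^ k) (1 - r)⁻¹ := hasSum_geometric_of_lt_one h0 h1
      have hsum : Summable (fun x : ℕ × (Fin d → ℕ) => r ^ x.1 * ∏ j, r ^ x.2 j) := by
        apply Summable.mul_of_nonneg hgeo.summable ih.summable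
        · intro x; positivity
        · intro p; exact Finset.prod_nonneg fun j _ => by positivity
      have hmul := hgeo.mul ih hsum
      have hiff := (Fin.consEquiv fun _ : Fin (d+1) => ℕ).symm.hasSum_iff
        (f := fun x : ℕ × (Fin d → ℕ) => r ^ x.1 * ∏ j, r ^ x.2 j)
        (a := (1 - r)⁻¹ * (1 - r)⁻¹ ^ d)
      have hcomp : (fun x : ℕ × (Fin d → ℕ) => r ^ x.1 * ∏ j, r ^ x.2 j) ∘ (Fin.consEquiv fun _ : Fin (d+1) => ℕ).symm
          = fun p : Fin (d+1) → ℕ => ∏ j, r ^ p j := by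
        funext p
        simp [Fin.consEquiv, Fin.prod_univ_succ, Fin.tail]
      have h2 : HasSum (fun p : Fin (d+1) → ℕ => ∏ j, r ^ p j) ((1 - r)⁻¹ * (1 - r)⁻¹ ^ d) := by
        rw [← hcomp]
        exact hiff.mpr hmul
      simpa [pow_succ, mul_comm] using h2



/-- The complex number `Cⁿ_{p₁…p_D}`: for `n ≥ 1` this is
`(n/(p₁+⋯+p_D+n)) · ∏_j binom(p₁+⋯+p_D+n, p_j)`; for `n = 0` it is `1` if all
`p_i = 0` and `0` otherwise. -/
noncomputable def Ccoef (D n : ℕ) (p : Fin D → ℕ) : ℂ :=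
  if n = 0 then (if ∀ i, p i = 0 then 1 else 0)
  else (n : ℂ) / ((∑ i, p i : ℕ) + n) * ∏ j, ((∑ i, p i + n).choose (p j) : ℂ)

/-- `F D n g = ∑_{(p₁,…,p_D) ∈ ℕ^D} Cⁿ_{p₁…p_D} ∏_i g_iᵖⁱ`. -/
noncomputable def F (D n : ℕ) (g : Fin D → ℂ) : ℂ :=
  ∑' p : Fin D → ℕ, Ccoef D n p * ∏ i, g i ^ p i

theorem Fn_polynomially_bounded (D : ℕ) (hD : 2 ≤ D) (K : ℝ) (hK : 1 < K) :
    ∃ εK > 0, εK < ((D : ℝ) - 1) ^ (D - 1) / (D : ℝ) ^ D ∧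
      ∀ g : Fin D → ℂ, (∀ i, ‖g i‖ < εK) → ∀ n : ℕ, ‖F D n g‖ ≤ K ^ n := by
  have hD2 : (2:ℝ) ≤ D := by exact_mod_cast hD
  have hD1 : (1:ℝ) ≤ D := by linarith
  have hD0 : (0:ℝ) < D := by linarith
  have hK0 : (0:ℝ) < K := by linarith
  set L : ℝ := (1 + K) / 2 with hLdef
  have hL1 : 1 < L := by rw [hLdef]; linarith
  have hLK : L < K := by rw [hLdef]; linarith
  have hL0 : (0:ℝ) < L := by linarith
  set t : ℝ := min ((1 - 1/L) / D) (1/2) with htdef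
  have h1L : (0:ℝ) < 1 - 1/L := by
    have : 1/L < 1 := by rw [div_lt_one hL0]; exact hL1
    linarith
  have ht0 : (0:ℝ) < t := lt_min (by positivity) (by norm_num)
  have ht_half : t ≤ 1/2 := min_le_right _ _
  have hDt : (D:ℝ) * t ≤ 1 - 1/L := by
    have h := min_le_left ((1 - 1/L)/D) (1/2)
    calc (D:ℝ) * t ≤ (D:ℝ) * ((1 - 1/L)/D) := by
          exact mul_le_mul_of_nonneg_left h hD0.le
      _ = 1 - 1/L := by field_simp
  have hA : (1 + t)^D ≤ L := by
    have hb : (1:ℝ) - D*t ≤ (1 - t)^D := by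
      have := one_add_mul_le_pow (a := -t) (by linarith) D
      simpa [sub_eq_add_neg] using this
    have h1Lle : 1/L ≤ (1 - t)^D := by linarith
    have hpos : (0:ℝ) < (1-t)^D := by
      apply pow_pos; linarith
    have hmul : (1+t)^D * (1-t)^D ≤ 1 := by
      rw [← mul_pow]
      calc ((1+t)*(1-t))^D ≤ 1^D := by
            apply pow_le_pow_left₀ (by nlinarith) (by nlinarith) D
        _ = 1 := one_pow D
    calc (1+t)^D ≤ 1/(1-t)^D := by rw [le_div_iff₀ hpos]; exact hmul
      _ ≤ 1/(1/L) := one_div_le_one_div_of_le (by positivity) h1Lle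
      _ = L := one_div_one_div L
  have hM : (0:ℝ) < ((D:ℝ) - 1) ^ (D - 1) / (D:ℝ) ^ D := by
    apply div_pos (pow_pos (by linarith) _) (pow_pos hD0 _)
  have hLK1 : L/K < 1 := by rw [div_lt_one hK0]; exact hLK
  have h1LK : (0:ℝ) < 1 - L/K := by linarith
  set ε : ℝ := min (t * (1 - L/K) / (D * L)) (((D:ℝ) - 1) ^ (D - 1) / (D:ℝ) ^ D / 2) with hεdef
  have hε0 : (0:ℝ) < ε := lt_min (by positivity) (by positivity)
  refine ⟨ε, hε0, lt_of_le_of_lt (min_le_right _ _) (by linarith), ?_⟩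
  intro g hg n
  -- constants
  set A : ℝ := (1 + t)^D with hAdef
  have hA0 : (0:ℝ) < A := by positivity
  have hA1 : (1:ℝ) ≤ A := by
    calc (1:ℝ) = 1^D := (one_pow D).symm
      _ ≤ (1+t)^D := pow_le_pow_left₀ one_pos.le (by linarith) D
  set r : ℝ := A * ε / t with hrdef
  have hr0 : (0:ℝ) ≤ r := by positivity
  have hεle : ε ≤ t * (1 - L/K) / (D * L) := min_le_left _ _
  have hrle : r ≤ (1 - L/K) / D := by
    rw [hrdef]
    rw [div_le_div_iff₀ ht0 hD0]
    calc A * ε * D ≤ L * (t * (1 - L/K) / (D * L)) * D := by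
          apply mul_le_mul_of_nonneg_right _ hD0.le
          exact mul_le_mul hA hεle hε0.le hL0.le
      _ = (1 - L/K) * t := by field_simp
  have hDr : (D:ℝ) * r ≤ 1 - L/K := by
    calc (D:ℝ) * r ≤ (D:ℝ) * ((1 - L/K)/D) := mul_le_mul_of_nonneg_left hrle hD0.le
      _ = 1 - L/K := by field_simp
  have hr1 : r < 1 := by
    have hrD : r ≤ (D:ℝ) * r := by nlinarith
    have hLK0 : (0:ℝ) < L/K := div_pos hL0 hK0
    linarith
  have h1r : (0:ℝ) < 1 - r := by linarith
  have hinv : (1 - r)⁻¹ ^ D ≤ K / L := by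
    have hb : 1 - (D:ℝ)*r ≤ (1 - r)^D := by
      have := one_add_mul_le_pow (a := -r) (by linarith) D
      simpa [sub_eq_add_neg] using this
    have hLK2 : L/K ≤ (1 - r)^D := by linarith
    rw [inv_pow]
    have hh := inv_anti₀ (div_pos hL0 hK0) hLK2
    simpa [inv_div] using hh
  rcases Nat.eq_zero_or_pos n with rfl | hn
  · -- n = 0
    have hF : F D 0 g = 1 := by
      rw [F, tsum_eq_single (0 : Fin D → ℕ)]
      · simp [Ccoef]
      · intro p hp
        have hne : ¬ ∀ i, p i = 0 := fun h => hp (funext h)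
        simp [Ccoef, hne]
    rw [hF]
    norm_num
  · -- n ≥ 1
    have hn0 : n ≠ 0 := hn.ne'
    have hbound : ∀ p : Fin D → ℕ,
        ‖Ccoef D n p * ∏ i, g i ^ p i‖ ≤ A ^ n * ∏ j, r ^ p j := by
      intro p
      rw [norm_mul]
      have hC : ‖Ccoef D n p‖ ≤ ∏ j, (((∑ i, p i) + n).choose (p j) : ℝ) := by
        rw [Ccoef, if_neg hn0, norm_mul, norm_prod]
        have e1 : ‖(n : ℂ) / (((∑ i, p i : ℕ) : ℂ) + (n : ℂ))‖ ≤ 1 := by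
          rw [norm_div]
          have hc : (((∑ i, p i : ℕ) : ℂ) + (n : ℂ)) = (((∑ i, p i) + n : ℕ) : ℂ) := by
            push_cast; ring
          rw [hc, Complex.norm_natCast, Complex.norm_natCast]
          apply div_le_one_of_le₀
          · exact_mod_cast Nat.le_add_left n (∑ i, p i)
          · positivity
        have e2 : ∀ j : Fin D, ‖((((∑ i, p i) + n).choose (p j) : ℕ) : ℂ)‖
            = (((∑ i, p i) + n).choose (p j) : ℝ) := fun j => Complex.norm_natCast _
        calc ‖(n : ℂ) / (((∑ i, p i : ℕ) : ℂ) + (n : ℂ))‖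
              * ∏ j, ‖((((∑ i, p i) + n).choose (p j) : ℕ) : ℂ)‖
            ≤ 1 * ∏ j, (((∑ i, p i) + n).choose (p j) : ℝ) := by
              rw [show (∏ j, ‖((((∑ i, p i) + n).choose (p j) : ℕ) : ℂ)‖)
                  = ∏ j, (((∑ i, p i) + n).choose (p j) : ℝ) from Finset.prod_congr rfl fun j _ => e2 j]
              exact mul_le_mul_of_nonneg_right e1 (Finset.prod_nonneg fun j _ => Nat.cast_nonneg _)
          _ = ∏ j, (((∑ i, p i) + n).choose (p j) : ℝ) := one_mul _
      have hgb : ‖∏ i, g i ^ p i‖ ≤ ∏ i, ε ^ p i := by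
        rw [norm_prod]
        apply Finset.prod_le_prod (fun i _ => norm_nonneg _)
        intro i _
        rw [norm_pow]
        exact pow_le_pow_left₀ (norm_nonneg _) (hg i).le _
      calc ‖Ccoef D n p‖ * ‖∏ i, g i ^ p i‖
          ≤ (∏ j, (((∑ i, p i) + n).choose (p j) : ℝ)) * ∏ i, ε ^ p i :=
            mul_le_mul hC hgb (norm_nonneg _) (Finset.prod_nonneg fun j _ => Nat.cast_nonneg _)
        _ = ∏ j, ((((∑ i, p i) + n).choose (p j) : ℝ) * ε ^ p j) := Finset.prod_mul_distrib.symm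
        _ ≤ ∏ j, ((1 + t) ^ ((∑ i, p i) + n) * (ε / t) ^ p j) := by
            apply Finset.prod_le_prod
            · intro j _; positivity
            · intro j _
              have hkey : ((((∑ i, p i) + n).choose (p j) : ℝ)) * ε ^ p j
                  = (((((∑ i, p i) + n).choose (p j)) : ℝ) * t ^ p j) * (ε / t) ^ p j := by
                rw [div_pow, mul_assoc]
                congr 1
                field_simp
              rw [hkey]
              exact mul_le_mul_of_nonneg_right
                (choose_mul_pow_le ((∑ i, p i) + n) (p j) ht0.le) (by positivity)
        _ = A ^ n * ∏ j, r ^ p j := by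
            rw [Finset.prod_mul_distrib, Finset.prod_const, Finset.card_univ, Fintype.card_fin,
              Finset.prod_pow_eq_pow_sum, Finset.prod_pow_eq_pow_sum]
            rw [hAdef, hrdef, hAdef]
            rw [show A * ε / t = (1+t)^D * (ε / t) by rw [hAdef]; ring]
            rw [mul_pow ((1+t)^D) (ε/t), ← pow_mul, ← pow_mul, ← pow_mul]
            rw [show ((∑ i, p i) + n) * D = D * n + D * (∑ i, p i) by ring, pow_add]
            ring
    have hhs : HasSum (fun p : Fin D → ℕ => A ^ n * ∏ j, r ^ p j) (A ^ n * ((1 - r)⁻¹ ^ D)) :=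
      (hasSum_pi_geometric D hr0 hr1).mul_left _
    have hFb : ‖F D n g‖ ≤ A ^ n * ((1 - r)⁻¹ ^ D) := tsum_of_norm_bounded hhs hbound
    obtain ⟨m, rfl⟩ : ∃ m, n = m + 1 := ⟨n - 1, (Nat.succ_pred_eq_of_pos hn).symm⟩
    calc ‖F D (m + 1) g‖ ≤ A ^ (m + 1) * ((1 - r)⁻¹ ^ D) := hFb
      _ ≤ L ^ (m + 1) * (K / L) := by
          apply mul_le_mul (pow_le_pow_left₀ hA0.le hA _) hinv (by positivity) (by positivity)
      _ = L ^ m * K := by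
          rw [pow_succ]
          field_simp
      _ ≤ K ^ m * K := by
          apply mul_le_mul_of_nonneg_right (pow_le_pow_left₀ hL0.le hLK.le m) hK0.le
      _ = K ^ (m + 1) := (pow_succ K m).symm
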